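/- The Kreweras complement map Kr : NC(n) → NC(n) is an order-reversing bijection on the lattice of non-crossing partitions of {1,...,n} with the reverse refinement partial order. -/

import Mathlib

open scoped BigOperators Classical

/-- Partitions of `Fin n` (i.e. of `{1,…,n}`). -/
abbrev NCP (n : ℕ) := Finpartition (Finset.univ : Finset (Fin n))

/-- `x` and `y` lie in the same block of `P`. -/
def pRel {n : ℕ} (P : NCP n) (x y : Fin n) : Prop := ∃ t ∈ P.parts, x ∈ t ∧ y ∈ t

/-- `P` is a non-crossing partition. -/
def IsNonCrossing {n : ℕ} (P : NCP n) : Prop :=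
  ∀ a b c d : Fin n, a < b → b < c → c < d → pRel P a c → pRel P b d → pRel P a b

/-- Every block of `P` has exactly `k` elements (`k`-equal). -/
def IsKEqual (k : ℕ) {n : ℕ} (P : NCP n) : Prop := ∀ t ∈ P.parts, t.card = k

/-- Every block of `P` has size divisible by `k` (`k`-divisible). -/
def IsKDivisible (k : ℕ) {n : ℕ} (P : NCP n) : Prop := ∀ t ∈ P.parts, k ∣ t.card

/-- Every block of `P` contains only numbers of one residue class mod `k`. -/
def IsKPreserving (k : ℕ) {n : ℕ} (P : NCP n) : Prop :=
  ∀ t ∈ P.parts, ∀ x ∈ t, ∀ y ∈ t, (x : ℕ) % k = (y : ℕ) % k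

/-- The relation on `{1,…,2n}` obtained by putting `P` on the odd positions and `Q` on
the even positions (0-indexed: `P` on evens, `Q` on odds). -/
def jointRel {n : ℕ} (P Q : NCP n) (x y : Fin (2 * n)) : Prop :=
  ((x : ℕ) % 2 = 0 ∧ (y : ℕ) % 2 = 0 ∧
      pRel P ⟨(x : ℕ) / 2, by have := x.isLt; omega⟩ ⟨(y : ℕ) / 2, by have := y.isLt; omega⟩) ∨
  ((x : ℕ) % 2 = 1 ∧ (y : ℕ) % 2 = 1 ∧
      pRel Q ⟨(x : ℕ) / 2, by have := x.isLt; omega⟩ ⟨(y : ℕ) / 2, by have := y.isLt; omega⟩)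

/-- A symmetric-relation analogue of non-crossing. -/
def RelNonCrossing {m : ℕ} (R : Fin m → Fin m → Prop) : Prop :=
  ∀ a b c d : Fin m, a < b → b < c → c < d → R a c → R b d → R a b

/-- `Q` is the Kreweras complement of `P`: the union `P ∪ Q` (interleaved) is non-crossing and
`Q` is the largest such partition in the reverse refinement order. -/
def IsKr {n : ℕ} (P Q : NCP n) : Prop :=
  RelNonCrossing (jointRel P Q) ∧ ∀ Q' : NCP n, RelNonCrossing (jointRel P Q') → Q' ≤ Q

namespace KrAux
variable {n : ℕ}

lemma pRel_iff_mem_part {P : NCP n} {x y : Fin n} : pRel P x y ↔ y ∈ P.part x := by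
  constructor
  · rintro ⟨t, ht, hx, hy⟩
    rwa [P.part_eq_of_mem ht hx]
  · intro h
    exact ⟨P.part x, P.part_mem.2 (Finset.mem_univ x), P.mem_part (Finset.mem_univ x), h⟩

lemma pRel_refl (P : NCP n) (x : Fin n) : pRel P x x :=
  pRel_iff_mem_part.2 (P.mem_part (Finset.mem_univ x))

lemma pRel_symm {P : NCP n} {x y : Fin n} (h : pRel P x y) : pRel P y x := by
  obtain ⟨t, ht, hx, hy⟩ := h; exact ⟨t, ht, hy, hx⟩

lemma mem_part_of_pRel {P : NCP n} {a u v : Fin n} (h : pRel P u v) (hv : v ∈ P.part a) :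
    u ∈ P.part a := by
  obtain ⟨t, ht, hu, hv'⟩ := h
  rwa [P.eq_of_mem_parts (P.part_mem.2 (Finset.mem_univ a)) ht hv hv']

lemma pRel_of_mem_part {P : NCP n} {a u v : Fin n} (hu : u ∈ P.part a) (hv : v ∈ P.part a) :
    pRel P u v := ⟨P.part a, P.part_mem.2 (Finset.mem_univ a), hu, hv⟩

/-- The non-crossing compatibility relation defining the Kreweras complement. -/
def S (P : NCP n) (x y : Fin n) : Prop :=
  ∀ u v : Fin n, pRel P u v → ((x < u ↔ x < v) ↔ (y < u ↔ y < v))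

lemma S_refl (P : NCP n) (x : Fin n) : S P x x := fun _ _ _ => Iff.rfl

lemma S_symm {P : NCP n} {x y : Fin n} (h : S P x y) : S P y x := fun u v huv => (h u v huv).symm

lemma S_trans {P : NCP n} {x y z : Fin n} (h1 : S P x y) (h2 : S P y z) : S P x z :=
  fun u v huv => (h1 u v huv).trans (h2 u v huv)

/-- The Kreweras complement of `P`. -/
noncomputable def kr (P : NCP n) : NCP n :=
  Finpartition.ofSetoid ⟨S P, fun x => S_refl P x, S_symm, S_trans⟩

lemma pRel_kr {P : NCP n} {x y : Fin n} : pRel (kr P) x y ↔ S P x y := by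
  rw [pRel_iff_mem_part, kr, Finpartition.mem_part_ofSetoid_iff_rel]
  rfl

/-- Reformulation of the `≤` order via the relations. -/
lemma le_of_pRel_imp {P Q : NCP n} (h : ∀ x y, pRel P x y → pRel Q x y) : P ≤ Q := by
  intro t ht
  obtain ⟨x, hx⟩ := P.nonempty_of_mem_parts ht
  refine ⟨Q.part x, Q.part_mem.2 (Finset.mem_univ x), fun y hy => ?_⟩
  have : pRel Q x y := h x y ⟨t, ht, hx, hy⟩
  exact pRel_iff_mem_part.1 this

lemma pRel_mono {P Q : NCP n} (h : P ≤ Q) {x y : Fin n} (hxy : pRel P x y) : pRel Q x y := by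
  obtain ⟨t, ht, hx, hy⟩ := hxy
  obtain ⟨c, hc, htc⟩ := h ht
  exact ⟨c, hc, htc hx, htc hy⟩


lemma jointRel_even {P Q : NCP n} {u v : Fin n} (h : pRel P u v) :
    jointRel P Q ⟨2 * (u : ℕ), by omega⟩ ⟨2 * (v : ℕ), by omega⟩ := by
  left
  refine ⟨by show 2 * (u : ℕ) % 2 = 0; omega, by show 2 * (v : ℕ) % 2 = 0; omega, ?_⟩
  have key : ∀ (w : Fin n) (hw : 2 * (w : ℕ) / 2 < n), (⟨2 * (w : ℕ) / 2, hw⟩ : Fin n) = w :=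
    fun w hw => Fin.ext (by show 2 * (w : ℕ) / 2 = (w : ℕ); omega)
  simp only [key]
  exact h

lemma jointRel_odd {P Q : NCP n} {u v : Fin n} (h : pRel Q u v) :
    jointRel P Q ⟨2 * (u : ℕ) + 1, by omega⟩ ⟨2 * (v : ℕ) + 1, by omega⟩ := by
  right
  refine ⟨by show (2 * (u : ℕ) + 1) % 2 = 1; omega,
    by show (2 * (v : ℕ) + 1) % 2 = 1; omega, ?_⟩
  have key : ∀ (w : Fin n) (hw : (2 * (w : ℕ) + 1) / 2 < n),
      (⟨(2 * (w : ℕ) + 1) / 2, hw⟩ : Fin n) = w :=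
    fun w hw => Fin.ext (by show (2 * (w : ℕ) + 1) / 2 = (w : ℕ); omega)
  simp only [key]
  exact h

/-- If the joint relation is non-crossing then no `P`-chord crosses a `Q`-chord. -/
lemma noCross_aux1 {P Q : NCP n} (h : RelNonCrossing (jointRel P Q)) {u v x y : Fin n}
    (huv : pRel P u v) (hxy : pRel Q x y)
    (h1 : (u : ℕ) ≤ x) (h2 : (x : ℕ) < v) (h3 : (v : ℕ) ≤ y) : False := by
  have := h ⟨2 * (u : ℕ), by omega⟩ ⟨2 * (x : ℕ) + 1, by omega⟩ ⟨2 * (v : ℕ), by omega⟩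
    ⟨2 * (y : ℕ) + 1, by omega⟩
    (show 2 * (u : ℕ) < 2 * (x : ℕ) + 1 by omega)
    (show 2 * (x : ℕ) + 1 < 2 * (v : ℕ) by omega)
    (show 2 * (v : ℕ) < 2 * (y : ℕ) + 1 by omega)
    (jointRel_even huv) (jointRel_odd hxy)
  rcases this with ⟨-, h', -⟩ | ⟨h', -⟩
  · exact absurd h' (show (2 * (x : ℕ) + 1) % 2 ≠ 0 by omega)
  · exact absurd h' (show 2 * (u : ℕ) % 2 ≠ 1 by omega)

lemma noCross_aux2 {P Q : NCP n} (h : RelNonCrossing (jointRel P Q)) {u v x y : Fin n}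
    (huv : pRel P u v) (hxy : pRel Q x y)
    (h1 : (x : ℕ) < u) (h2 : (u : ℕ) ≤ y) (h3 : (y : ℕ) < v) : False := by
  have := h ⟨2 * (x : ℕ) + 1, by omega⟩ ⟨2 * (u : ℕ), by omega⟩ ⟨2 * (y : ℕ) + 1, by omega⟩
    ⟨2 * (v : ℕ), by omega⟩
    (show 2 * (x : ℕ) + 1 < 2 * (u : ℕ) by omega)
    (show 2 * (u : ℕ) < 2 * (y : ℕ) + 1 by omega)
    (show 2 * (y : ℕ) + 1 < 2 * (v : ℕ) by omega)
    (jointRel_odd hxy) (jointRel_even huv)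
  rcases this with ⟨h', -⟩ | ⟨-, h', -⟩
  · exact absurd h' (show (2 * (x : ℕ) + 1) % 2 ≠ 0 by omega)
  · exact absurd h' (show 2 * (u : ℕ) % 2 ≠ 1 by omega)

lemma noCross {P Q : NCP n} (h : RelNonCrossing (jointRel P Q)) {u v x y : Fin n}
    (huv : pRel P u v) (hxy : pRel Q x y) :
    (((x : ℕ) < u ↔ (x : ℕ) < v) ↔ ((y : ℕ) < u ↔ (y : ℕ) < v)) := by
  by_contra hc
  have hx : ((u:ℕ) ≤ x ∧ (x:ℕ) < v ∧ (v:ℕ) ≤ y) ∨ ((x:ℕ) < u ∧ (u:ℕ) ≤ y ∧ (y:ℕ) < v) ∨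
      ((v:ℕ) ≤ x ∧ (x:ℕ) < u ∧ (u:ℕ) ≤ y) ∨ ((x:ℕ) < v ∧ (v:ℕ) ≤ y ∧ (y:ℕ) < u) ∨
      ((u:ℕ) ≤ y ∧ (y:ℕ) < v ∧ (v:ℕ) ≤ x) ∨ ((y:ℕ) < u ∧ (u:ℕ) ≤ x ∧ (x:ℕ) < v) ∨
      ((v:ℕ) ≤ y ∧ (y:ℕ) < u ∧ (u:ℕ) ≤ x) ∨ ((y:ℕ) < v ∧ (v:ℕ) ≤ x ∧ (x:ℕ) < u) := by
    omega
  rcases hx with ⟨a,b,c⟩|⟨a,b,c⟩|⟨a,b,c⟩|⟨a,b,c⟩|⟨a,b,c⟩|⟨a,b,c⟩|⟨a,b,c⟩|⟨a,b,c⟩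
  · exact noCross_aux1 h huv hxy a b c
  · exact noCross_aux2 h huv hxy a b c
  · exact noCross_aux1 h (pRel_symm huv) hxy a b c
  · exact noCross_aux2 h (pRel_symm huv) hxy a b c
  · exact noCross_aux1 h huv (pRel_symm hxy) a b c
  · exact noCross_aux2 h huv (pRel_symm hxy) a b c
  · exact noCross_aux1 h (pRel_symm huv) (pRel_symm hxy) a b c
  · exact noCross_aux2 h (pRel_symm huv) (pRel_symm hxy) a b c

/-- `S P` is itself non-crossing (regardless of `P`). -/
lemma S_noncross {P : NCP n} {a b c d : Fin n} (hab : (a:ℕ) < b) (hbc : (b:ℕ) < c)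
    (hcd : (c:ℕ) < d) (hac : S P a c) (hbd : S P b d) : S P a b := by
  intro u v huv
  have h1 := hac u v huv
  have h2 := hbd u v huv
  by_contra hcon
  -- the set {t | ¬(t<u ↔ t<v)} is an interval (Ico of min max); derive contradiction
  rcases Nat.lt_trichotomy (u:ℕ) (v:ℕ) with h | h | h
  · -- bad set is [u, v)
    simp only [Fin.lt_def] at h1 h2 hcon
    omega
  · exact hcon (by simp only [Fin.lt_def]; omega)
  · simp only [Fin.lt_def] at h1 h2 hcon
    omega

lemma isNonCrossing_kr (P : NCP n) : IsNonCrossing (kr P) := by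
  intro a b c d hab hbc hcd hac hbd
  rw [pRel_kr] at *
  exact S_noncross hab hbc hcd hac hbd

/-- The joint relation of `P` and its complement is non-crossing. -/
lemma relNC_kr {P : NCP n} (hP : IsNonCrossing P) : RelNonCrossing (jointRel P (kr P)) := by
  rintro a b c d hab hbc hcd (⟨ha, hc, hac⟩ | ⟨ha, hc, hac⟩) (⟨hb, hd, hbd⟩ | ⟨hb, hd, hbd⟩)
  · -- all even : use non-crossing of P
    left
    refine ⟨ha, hb, hP _ _ _ _ ?_ ?_ ?_ hac hbd⟩ <;>
      simp only [Fin.lt_def] <;> simp only [Fin.lt_def] at hab hbc hcd <;> omega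
  · -- a,c even; b,d odd : impossible crossing
    exfalso
    have := pRel_kr.1 hbd _ _ hac
    simp only [Fin.lt_def] at this hab hbc hcd
    omega
  · -- a,c odd; b,d even : impossible crossing
    exfalso
    have := pRel_kr.1 hac _ _ hbd
    simp only [Fin.lt_def] at this hab hbc hcd
    omega
  · -- all odd : use S_noncross
    right
    refine ⟨ha, hb, pRel_kr.2 (S_noncross ?_ ?_ ?_ (pRel_kr.1 hac) (pRel_kr.1 hbd))⟩ <;>
      simp only [Fin.lt_def] <;> simp only [Fin.lt_def] at hab hbc hcd <;> omega

/-- Maximality of the complement. -/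
lemma kr_max {P Q' : NCP n} (h : RelNonCrossing (jointRel P Q')) : Q' ≤ kr P := by
  refine le_of_pRel_imp fun x y hxy => pRel_kr.2 fun u v huv => ?_
  have := noCross h huv hxy
  simp only [Fin.lt_def]
  exact this

lemma isKr_kr {P : NCP n} (hP : IsNonCrossing P) : IsKr P (kr P) :=
  ⟨relNC_kr hP, fun _ h => kr_max h⟩

lemma isKr_unique {P Q1 Q2 : NCP n} (h1 : IsKr P Q1) (h2 : IsKr P Q2) : Q1 = Q2 :=
  le_antisymm (h2.2 _ h1.1) (h1.2 _ h2.1)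

lemma S_of_interval {P : NCP n} (x y : Fin n) (hxy : (x:ℕ) ≤ (y:ℕ))
    (key : ∀ u v : Fin n, pRel P u v → (x:ℕ) < u → (u:ℕ) ≤ y → (x:ℕ) < v ∧ (v:ℕ) ≤ y) :
    S P x y := by
  intro u v huv
  by_contra hc
  simp only [Fin.lt_def] at hc
  have k1 := key u v huv
  have k2 := key v u (pRel_symm huv)
  omega

/-- Separation: if `a` and `c` lie in different blocks of a non-crossing `P`, some
`S P`-related pair separates them. -/
lemma sep {P : NCP n} (hP : IsNonCrossing P) {a c : Fin n} (hlt : (a:ℕ) < (c:ℕ))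
    (hnc : c ∉ P.part a) :
    ∃ x y : Fin n, S P x y ∧
      ¬((((x:ℕ) < a) ↔ ((x:ℕ) < c)) ↔ (((y:ℕ) < a) ↔ ((y:ℕ) < c))) := by
  set A := P.part a with hA
  have haA : a ∈ A := P.mem_part (Finset.mem_univ a)
  have hAne : A.Nonempty := ⟨a, haA⟩
  have hmemA : ∀ {u v : Fin n}, pRel P u v → v ∈ A → u ∈ A := fun h hv => mem_part_of_pRel h hv
  have hrelA : ∀ {u v : Fin n}, u ∈ A → v ∈ A → pRel P u v := fun hu hv => pRel_of_mem_part hu hv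
  set M := A.max' hAne with hM
  have hMA : M ∈ A := A.max'_mem hAne
  have hleM : ∀ z ∈ A, (z:ℕ) ≤ M := fun z hz => A.le_max' z hz
  have haM : (a:ℕ) ≤ M := hleM a haA
  rcases Nat.lt_trichotomy (c:ℕ) (M:ℕ) with hcM | hcM | hcM
  · -- c lies strictly inside the hull of A
    set L := A.filter (fun z : Fin n => (z:ℕ) < (c:ℕ)) with hL
    have hLne : L.Nonempty := ⟨a, Finset.mem_filter.2 ⟨haA, hlt⟩⟩
    set R := A.filter (fun z : Fin n => (c:ℕ) < (z:ℕ)) with hR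
    have hRne : R.Nonempty := ⟨M, Finset.mem_filter.2 ⟨hMA, hcM⟩⟩
    set x := L.max' hLne with hx
    set y' := R.min' hRne with hy'
    have hxA : x ∈ A := (Finset.mem_filter.1 (L.max'_mem hLne)).1
    have hxc : (x:ℕ) < c := (Finset.mem_filter.1 (L.max'_mem hLne)).2
    have hy'A : y' ∈ A := (Finset.mem_filter.1 (R.min'_mem hRne)).1
    have hcy' : (c:ℕ) < y' := (Finset.mem_filter.1 (R.min'_mem hRne)).2
    have hxmax : ∀ z ∈ A, (z:ℕ) < c → (z:ℕ) ≤ x :=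
      fun z hz h => L.le_max' z (Finset.mem_filter.2 ⟨hz, h⟩)
    have hy'min : ∀ z ∈ A, (c:ℕ) < z → (y':ℕ) ≤ z :=
      fun z hz h => R.min'_le z (Finset.mem_filter.2 ⟨hz, h⟩)
    have hax : (a:ℕ) ≤ x := hxmax a haA hlt
    have hy'n : (y':ℕ) < n := y'.isLt
    refine ⟨x, ⟨(y':ℕ) - 1, by omega⟩, S_of_interval _ _ (by simp only [Fin.val_mk]; omega) ?_, by simp only [Fin.val_mk]; omega⟩
    intro u v huv hu1 hu2
    simp only [Fin.val_mk] at hu2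
    have huA : u ∉ A := by
      intro huA
      rcases Nat.lt_trichotomy (u:ℕ) (c:ℕ) with h | h | h
      · exact absurd (hxmax u huA h) (by omega)
      · exact hnc (show c ∈ A by rw [show c = u from Fin.ext h.symm]; exact huA)
      · exact absurd (hy'min u huA h) (by omega)
    by_contra hv
    simp only [Fin.val_mk] at hv
    have hxy'rel : pRel P x y' := hrelA hxA hy'A
    rcases (by omega : (v:ℕ) < x ∨ (v:ℕ) = x ∨ (v:ℕ) = y' ∨ (y':ℕ) < v) with h | h | h | h
    · have hcon := hP v x u y' (show v < x from h) (show x < u from hu1)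
        (show u < y' from by omega) (pRel_symm huv) hxy'rel
      exact huA (hmemA huv (hmemA hcon hxA))
    · exact huA (hmemA huv (show v ∈ A by rw [show v = x from Fin.ext h]; exact hxA))
    · exact huA (hmemA huv (show v ∈ A by rw [show v = y' from Fin.ext h]; exact hy'A))
    · have hcon := hP x u y' v (show x < u from hu1) (show u < y' from by omega)
        (show y' < v from h) hxy'rel huv
      exact huA (hmemA (pRel_symm hcon) hxA)
  · exact absurd (show c ∈ A by rw [show c = M from Fin.ext hcM]; exact hMA) hnc
  · -- c lies to the right of the hull of A
    set m := A.min' hAne with hm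
    have hmA : m ∈ A := A.min'_mem hAne
    have hgem : ∀ z ∈ A, (m:ℕ) ≤ z := fun z hz => A.min'_le z hz
    have ham : (m:ℕ) ≤ a := hgem a haA
    have hmn : (m:ℕ) < n := m.isLt
    rcases Nat.eq_zero_or_pos (m:ℕ) with hm0 | hm0
    · -- min is 0 : separate with the chord (M, n-1)
      have hn : 0 < n := a.pos
      refine ⟨M, ⟨n - 1, by omega⟩, S_of_interval _ _ (by simp only [Fin.val_mk]; have := M.isLt; omega) ?_, ?_⟩
      · intro u v huv hu1 hu2
        refine ⟨?_, by have := v.isLt; simp only [Fin.val_mk]; omega⟩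
        have huA : u ∉ A := fun huA => absurd (hleM u huA) (by omega)
        by_contra hvM
        push_neg at hvM
        have hvA : v ∉ A := fun hvA => huA (hmemA huv hvA)
        have hv0 : 0 < (v:ℕ) := by
          rcases Nat.eq_zero_or_pos (v:ℕ) with h0 | h0
          · exact absurd (show v ∈ A by rw [show v = m from Fin.ext (by omega)]; exact hmA) hvA
          · exact h0
        have hvM' : (v:ℕ) < M := by
          rcases Nat.lt_or_ge (v:ℕ) (M:ℕ) with h0 | h0
          · exact h0
          · exact absurd (show v ∈ A by rw [show v = M from Fin.ext (by omega)]; exact hMA) hvA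
        have hcon := hP m v M u (show m < v from by omega) (show v < M from hvM')
          (show M < u from hu1) (hrelA hmA hMA) (pRel_symm huv)
        exact hvA (hmemA (pRel_symm hcon) hmA)
      · simp only [Fin.val_mk]
        have := c.isLt
        omega
    · -- min is positive : separate with the chord (m-1, M)
      refine ⟨⟨(m:ℕ) - 1, by omega⟩, M, S_of_interval _ _ (by simp only [Fin.val_mk]; omega) ?_, by simp only [Fin.val_mk]; omega⟩
      intro u v huv hu1 hu2
      simp only [Fin.val_mk] at hu1 ⊢
      by_cases huA : u ∈ A
      · have hvA : v ∈ A := hmemA (pRel_symm huv) huA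
        exact ⟨by have := hgem v hvA; omega, hleM v hvA⟩
      · have hum : (m:ℕ) < u := by
          rcases Nat.lt_or_ge (m:ℕ) (u:ℕ) with h0 | h0
          · exact h0
          · exact absurd (show u ∈ A by rw [show u = m from Fin.ext (by omega)]; exact hmA) huA
        have huM : (u:ℕ) < M := by
          rcases Nat.lt_or_ge (u:ℕ) (M:ℕ) with h0 | h0
          · exact h0
          · exact absurd (show u ∈ A by rw [show u = M from Fin.ext (by omega)]; exact hMA) huA
        by_contra hv
        have hvA : v ∉ A := fun hvA => huA (hmemA huv hvA)
        rcases (by omega : (v:ℕ) < m ∨ (v:ℕ) = m ∨ (v:ℕ) = M ∨ (M:ℕ) < v) with h | h | h | h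
        · have hcon := hP v m u M (show v < m from h) (show m < u from hum)
            (show u < M from huM) (pRel_symm huv) (hrelA hmA hMA)
          exact hvA (hmemA hcon hmA)
        · exact hvA (show v ∈ A by rw [show v = m from Fin.ext h]; exact hmA)
        · exact hvA (show v ∈ A by rw [show v = M from Fin.ext h]; exact hMA)
        · have hcon := hP m u M v (show m < u from hum) (show u < M from huM)
            (show M < v from h) (hrelA hmA hMA) huv
          exact huA (hmemA (pRel_symm hcon) hmA)

/-- Recovering `P` from its complement relation. -/
lemma pRel_iff_dual {P : NCP n} (hP : IsNonCrossing P) (a c : Fin n) :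
    pRel P a c ↔ ∀ x y : Fin n, S P x y →
      ((((x:ℕ) < a) ↔ ((x:ℕ) < c)) ↔ (((y:ℕ) < a) ↔ ((y:ℕ) < c))) := by
  constructor
  · intro h x y hS
    have := hS a c h
    simpa only [Fin.lt_def] using this
  · intro h
    by_contra hnc
    rcases Nat.lt_trichotomy (a:ℕ) (c:ℕ) with hlt | he | hlt
    · obtain ⟨x, y, hS, hf⟩ := sep hP hlt (fun hc => hnc (pRel_iff_mem_part.2 hc))
      exact hf (h x y hS)
    · exact hnc ((show a = c from Fin.ext he) ▸ pRel_refl P a)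
    · obtain ⟨x, y, hS, hf⟩ :=
        sep hP hlt (fun hc => hnc (pRel_symm (pRel_iff_mem_part.2 hc)))
      exact hf (by have := h x y hS; tauto)

instance : Finite (NCP n) :=
  Finite.of_injective (fun P => P.parts) fun P Q h => Finpartition.ext h

/-- Any partition whose joint relation with `kr P` is non-crossing refines `P`. -/
lemma dual_max {P : NCP n} (hP : IsNonCrossing P) {P' : NCP n}
    (h : RelNonCrossing (jointRel P' (kr P))) : P' ≤ P := by
  refine le_of_pRel_imp fun a c hac => ?_
  rw [pRel_iff_dual hP]
  intro x y hS
  exact noCross h hac (pRel_kr.2 hS)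

lemma relNC_of_le {P Q : NCP n} (hP : IsNonCrossing P) (hle : P ≤ Q) :
    RelNonCrossing (jointRel P (kr Q)) := by
  rintro a b c d hab hbc hcd (⟨ha, hc, hac⟩ | ⟨ha, hc, hac⟩) (⟨hb, hd, hbd⟩ | ⟨hb, hd, hbd⟩)
  · left
    refine ⟨ha, hb, hP _ _ _ _ ?_ ?_ ?_ hac hbd⟩ <;>
      simp only [Fin.lt_def] <;> simp only [Fin.lt_def] at hab hbc hcd <;> omega
  · exfalso
    have := pRel_kr.1 hbd _ _ (pRel_mono hle hac)
    simp only [Fin.lt_def] at this hab hbc hcd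
    omega
  · exfalso
    have := pRel_kr.1 hac _ _ (pRel_mono hle hbd)
    simp only [Fin.lt_def] at this hab hbc hcd
    omega
  · right
    refine ⟨ha, hb, pRel_kr.2 (S_noncross ?_ ?_ ?_ (pRel_kr.1 hac) (pRel_kr.1 hbd))⟩ <;>
      simp only [Fin.lt_def] at hab hbc hcd ⊢ <;> omega
end KrAux

/-- The Kreweras complement map exists on non-crossing partitions of `{1,…,n}` and any such map
is an order-reversing bijection for the reverse refinement order. -/
theorem stmt4 (n : ℕ) (hn : 0 < n) :
    (∀ P : {P : NCP n // IsNonCrossing P}, ∃ Q : {Q : NCP n // IsNonCrossing Q},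
        IsKr P.1 Q.1) ∧
    ∀ Kr : {P : NCP n // IsNonCrossing P} → {P : NCP n // IsNonCrossing P},
      (∀ P, IsKr P.1 (Kr P).1) →
        Function.Bijective Kr ∧
          ∀ P Q : {P : NCP n // IsNonCrossing P}, P.1 ≤ Q.1 → (Kr Q).1 ≤ (Kr P).1 := by
  constructor
  · rintro ⟨P, hP⟩
    exact ⟨⟨KrAux.kr P, KrAux.isNonCrossing_kr P⟩, KrAux.isKr_kr hP⟩
  · intro Kr hKr
    have hkr_eq : ∀ P : {P : NCP n // IsNonCrossing P}, (Kr P).1 = KrAux.kr P.1 :=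
      fun P => KrAux.isKr_unique (hKr P) (KrAux.isKr_kr P.2)
    have hinj : Function.Injective Kr := by
      intro P Q h
      have h1 : KrAux.kr P.1 = KrAux.kr Q.1 := by rw [← hkr_eq P, ← hkr_eq Q, h]
      have hS : ∀ x y, KrAux.S P.1 x y ↔ KrAux.S Q.1 x y := fun x y => by
        rw [← KrAux.pRel_kr, ← KrAux.pRel_kr, h1]
      have hrel : ∀ a c, pRel P.1 a c ↔ pRel Q.1 a c := by
        intro a c
        rw [KrAux.pRel_iff_dual P.2, KrAux.pRel_iff_dual Q.2]
        constructor <;> intro hh x y hSxy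
        · exact hh x y ((hS x y).2 hSxy)
        · exact hh x y ((hS x y).1 hSxy)
      exact Subtype.ext (le_antisymm (KrAux.le_of_pRel_imp fun x y => (hrel x y).1)
        (KrAux.le_of_pRel_imp fun x y => (hrel x y).2))
    refine ⟨⟨hinj, Finite.surjective_of_injective hinj⟩, ?_⟩
    intro P Q hPQ
    rw [hkr_eq P, hkr_eq Q]
    exact KrAux.kr_max (KrAux.relNC_of_le P.2 hPQ)
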